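/- For every integer k ≥ 2 there exists an oriented k-uniform hypergraph with Property O having exactly 3^{k−1} vertices and exactly 2^{2(k−2)}·3^{C(k−1,2)+1} edges. -/

import Mathlib

/-- An ordered `k`-set (`k`-tuple of distinct elements of `V`), given as an
embedding `Fin k ↪ V`, is *consistent* with a (strict) linear order `r` on `V`
if its entries are increasing with respect to `r`. -/
def Consistent {k : ℕ} {V : Type*} (r : V → V → Prop) (e : Fin k ↪ V) : Prop :=
  ∀ i j : Fin k, i < j → r (e i) (e j)

/-- An *oriented `k`-uniform hypergraph* on `V`: a family of `k`-tuples of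
distinct elements of `V` (embeddings `Fin k ↪ V`) such that no two tuples have
the same underlying `k`-element set. -/
structure OrientedHypergraph (k : ℕ) (V : Type*) where
  edges : Finset (Fin k ↪ V)
  eq_of_range_eq : ∀ e ∈ edges, ∀ f ∈ edges, Set.range ⇑e = Set.range ⇑f → e = f

/-- *Property O*: for every linear order (given by its strict order relation `r`)
on the vertex set, some edge is consistent with it. -/
def PropertyO {k : ℕ} {V : Type*} (H : OrientedHypergraph k V) : Prop :=
  ∀ r : V → V → Prop, IsStrictTotalOrder V r → ∃ e ∈ H.edges, Consistent r e

/-- A *`k`-tournament*: an oriented `k`-uniform hypergraph containing a tuple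
for every `k`-element subset of the vertex set (such a tuple is unique by
`eq_of_range_eq`). -/
def IsTournament {k : ℕ} {V : Type*} (H : OrientedHypergraph k V) : Prop :=
  ∀ S : Finset V, S.card = k → ∃ e ∈ H.edges, Set.range ⇑e = ↑S
namespace PropOAux

open Function

lemma fin3_ne_add_one (a : Fin 3) : a ≠ a + 1 := by revert a; decide

lemma fin3_pair_eq {a b : Fin 3} (h1 : a = b + 1) (h2 : b = a + 1) : False := by
  revert h1 h2; revert a b; decide

lemma fin3_forall {P : Fin 3 → Prop} (h0 : P 0) (h1 : P 1) (h2 : P 2) (i : Fin 3) : P i := by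
  fin_cases i <;> simpa

lemma exists_min3 {α : Type*} (r : α → α → Prop) [IsTrichotomous α r] [IsTrans α r]
    (f : Fin 3 → α) (hf : Function.Injective f) :
    ∃ j, ∀ i, i ≠ j → r (f j) (f i) := by
  have tri : ∀ i j : Fin 3, i ≠ j → r (f i) (f j) ∨ r (f j) (f i) := by
    intro i j hij
    rcases trichotomous_of r (f i) (f j) with h | h | h
    · exact Or.inl h
    · exact absurd (hf h) hij
    · exact Or.inr h
  rcases tri 0 1 (by decide) with h01 | h10
  · rcases tri 0 2 (by decide) with h02 | h20
    · exact ⟨0, fin3_forall (fun h => absurd rfl h) (fun _ => h01) (fun _ => h02)⟩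
    · exact ⟨2, fin3_forall (fun _ => h20) (fun _ => trans_of r h20 h01) (fun h => absurd rfl h)⟩
  · rcases tri 1 2 (by decide) with h12 | h21
    · exact ⟨1, fin3_forall (fun _ => h10) (fun h => absurd rfl h) (fun _ => h12)⟩
    · exact ⟨2, fin3_forall (fun _ => trans_of r h21 h10) (fun _ => h21) (fun h => absurd rfl h)⟩

lemma exists_cyc3 {α : Type*} (r : α → α → Prop) [IsTrichotomous α r] [IsTrans α r]
    [IsIrrefl α r] (f : Fin 3 → α) (hf : Function.Injective f) :
    ∃ j : Fin 3, r (f j) (f (j + 1)) := by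
  by_contra hcon
  push_neg at hcon
  have tri : ∀ j : Fin 3, r (f (j + 1)) (f j) := by
    intro j
    rcases trichotomous_of r (f j) (f (j + 1)) with h | h | h
    · exact absurd h (hcon j)
    · exact absurd (hf h) (fin3_ne_add_one j)
    · exact h
  have a := tri 0
  have b := tri 1
  have c := tri 2
  rw [show (0 : Fin 3) + 1 = 1 by decide] at a
  rw [show (1 : Fin 3) + 1 = 2 by decide] at b
  rw [show (2 : Fin 3) + 1 = 0 by decide] at c
  exact irrefl_of r (f 0) (trans_of r (trans_of r c b) a)

variable {V : Type*} {m : ℕ}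

def funA (e : Fin (m + 2) ↪ V) (c : Fin (m + 2) → Fin 3) : Fin (m + 3) → V × Fin 3 :=
  Fin.snoc (fun i => (e i, c i)) (e (Fin.last (m + 1)), c (Fin.last (m + 1)) + 1)

@[simp] lemma funA_castSucc (e : Fin (m + 2) ↪ V) (c : Fin (m + 2) → Fin 3) (i : Fin (m + 2)) :
    funA e c i.castSucc = (e i, c i) := Fin.snoc_castSucc _ _ _

@[simp] lemma funA_last (e : Fin (m + 2) ↪ V) (c : Fin (m + 2) → Fin 3) :
    funA e c (Fin.last (m + 2)) = (e (Fin.last (m + 1)), c (Fin.last (m + 1)) + 1) :=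
  Fin.snoc_last _ _

lemma funA_inj (e : Fin (m + 2) ↪ V) (c : Fin (m + 2) → Fin 3) :
    Function.Injective (funA e c) := by
  intro i j h
  by_cases hi : i = Fin.last (m + 2) <;> by_cases hj : j = Fin.last (m + 2)
  · rw [hi, hj]
  · obtain ⟨j', rfl⟩ := Fin.exists_castSucc_eq.mpr hj
    subst hi
    rw [funA_last, funA_castSucc] at h
    obtain rfl := e.injective (congrArg Prod.fst h).symm
    exact absurd (congrArg Prod.snd h).symm (fin3_ne_add_one _)
  · obtain ⟨i', rfl⟩ := Fin.exists_castSucc_eq.mpr hi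
    subst hj
    rw [funA_last, funA_castSucc] at h
    obtain rfl := e.injective (congrArg Prod.fst h)
    exact absurd (congrArg Prod.snd h) (fin3_ne_add_one _)
  · obtain ⟨i', rfl⟩ := Fin.exists_castSucc_eq.mpr hi
    obtain ⟨j', rfl⟩ := Fin.exists_castSucc_eq.mpr hj
    rw [funA_castSucc, funA_castSucc] at h
    exact congrArg Fin.castSucc (e.injective (congrArg Prod.fst h))

def funB (e : Fin (m + 2) ↪ V) (c : Fin (m + 1) → Fin 3) : Fin (m + 3) → V × Fin 3 :=
  Fin.cons (e 0, 0) (Fin.cons (e 0, 1) (fun i => (e i.succ, c i)))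

@[simp] lemma funB_zero (e : Fin (m + 2) ↪ V) (c : Fin (m + 1) → Fin 3) :
    funB e c 0 = (e 0, 0) := Fin.cons_zero _ _

@[simp] lemma funB_one (e : Fin (m + 2) ↪ V) (c : Fin (m + 1) → Fin 3) :
    funB e c (Fin.succ 0) = (e 0, 1) := by
  rw [funB, Fin.cons_succ, Fin.cons_zero]

@[simp] lemma funB_ss (e : Fin (m + 2) ↪ V) (c : Fin (m + 1) → Fin 3) (i : Fin (m + 1)) :
    funB e c i.succ.succ = (e i.succ, c i) := by
  rw [funB, Fin.cons_succ, Fin.cons_succ]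

lemma funB_cases (e : Fin (m + 2) ↪ V) (c : Fin (m + 1) → Fin 3) (i : Fin (m + 3)) :
    funB e c i = (e 0, 0) ∨ funB e c i = (e 0, 1) ∨
      ∃ i' : Fin (m + 1), i = i'.succ.succ ∧ funB e c i = (e i'.succ, c i') := by
  rcases Fin.eq_zero_or_eq_succ i with rfl | ⟨j, rfl⟩
  · exact Or.inl (funB_zero e c)
  · rcases Fin.eq_zero_or_eq_succ j with rfl | ⟨j', rfl⟩
    · exact Or.inr (Or.inl (funB_one e c))
    · exact Or.inr (Or.inr ⟨j', rfl, funB_ss e c j'⟩)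

lemma funB_inj (e : Fin (m + 2) ↪ V) (c : Fin (m + 1) → Fin 3) :
    Function.Injective (funB e c) := by
  intro i j h
  rcases Fin.eq_zero_or_eq_succ i with rfl | ⟨i', rfl⟩ <;>
    rcases Fin.eq_zero_or_eq_succ j with rfl | ⟨j', rfl⟩
  · rfl
  · rcases Fin.eq_zero_or_eq_succ j' with rfl | ⟨j'', rfl⟩
    · rw [funB_zero, funB_one] at h
      have h2 : (0 : Fin 3) = 1 := congrArg Prod.snd h
      exact absurd h2 (by decide)
    · rw [funB_zero, funB_ss] at h
      exact absurd (e.injective (congrArg Prod.fst h)).symm (Fin.succ_ne_zero _)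
  · rcases Fin.eq_zero_or_eq_succ i' with rfl | ⟨i'', rfl⟩
    · rw [funB_one, funB_zero] at h
      have h2 : (1 : Fin 3) = 0 := congrArg Prod.snd h
      exact absurd h2 (by decide)
    · rw [funB_ss, funB_zero] at h
      exact absurd (e.injective (congrArg Prod.fst h)) (Fin.succ_ne_zero _)
  · rcases Fin.eq_zero_or_eq_succ i' with rfl | ⟨i'', rfl⟩ <;>
      rcases Fin.eq_zero_or_eq_succ j' with rfl | ⟨j'', rfl⟩
    · rfl
    · rw [funB_one, funB_ss] at h
      exact absurd (e.injective (congrArg Prod.fst h)).symm (Fin.succ_ne_zero _)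
    · rw [funB_ss, funB_one] at h
      exact absurd (e.injective (congrArg Prod.fst h)) (Fin.succ_ne_zero _)
    · rw [funB_ss, funB_ss] at h
      have := Fin.succ_injective _ (e.injective (congrArg Prod.fst h))
      rw [this]

lemma mem_range_funA {e : Fin (m + 2) ↪ V} {c : Fin (m + 2) → Fin 3} {p : V × Fin 3} :
    p ∈ Set.range (funA e c) ↔
      (∃ i, p = (e i, c i)) ∨ p = (e (Fin.last (m + 1)), c (Fin.last (m + 1)) + 1) := by
  constructor
  · rintro ⟨i, rfl⟩
    by_cases hi : i = Fin.last (m + 2)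
    · subst hi; exact Or.inr (funA_last e c)
    · obtain ⟨i', rfl⟩ := Fin.exists_castSucc_eq.mpr hi
      exact Or.inl ⟨i', funA_castSucc e c i'⟩
  · rintro (⟨i, rfl⟩ | rfl)
    · exact ⟨i.castSucc, funA_castSucc e c i⟩
    · exact ⟨Fin.last _, funA_last e c⟩

lemma mem_range_funB {e : Fin (m + 2) ↪ V} {c : Fin (m + 1) → Fin 3} {p : V × Fin 3} :
    p ∈ Set.range (funB e c) ↔
      p = (e 0, 0) ∨ p = (e 0, 1) ∨ ∃ i : Fin (m + 1), p = (e i.succ, c i) := by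
  constructor
  · rintro ⟨i, rfl⟩
    rcases funB_cases e c i with h | h | ⟨i', _, h⟩
    · exact Or.inl h
    · exact Or.inr (Or.inl h)
    · exact Or.inr (Or.inr ⟨i', h⟩)
  · rintro (rfl | rfl | ⟨i, rfl⟩)
    · exact ⟨0, funB_zero e c⟩
    · exact ⟨Fin.succ 0, funB_one e c⟩
    · exact ⟨i.succ.succ, funB_ss e c i⟩

lemma fst_range_funA (e : Fin (m + 2) ↪ V) (c : Fin (m + 2) → Fin 3) :
    Prod.fst '' Set.range (funA e c) = Set.range ⇑e := by
  ext v
  constructor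
  · rintro ⟨p, hp, rfl⟩
    rcases mem_range_funA.mp hp with ⟨i, rfl⟩ | rfl
    · exact ⟨i, rfl⟩
    · exact ⟨_, rfl⟩
  · rintro ⟨i, rfl⟩
    exact ⟨(e i, c i), mem_range_funA.mpr (Or.inl ⟨i, rfl⟩), rfl⟩

lemma fst_range_funB (e : Fin (m + 2) ↪ V) (c : Fin (m + 1) → Fin 3) :
    Prod.fst '' Set.range (funB e c) = Set.range ⇑e := by
  ext v
  constructor
  · rintro ⟨p, hp, rfl⟩
    rcases mem_range_funB.mp hp with rfl | rfl | ⟨i, rfl⟩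
    · exact ⟨0, rfl⟩
    · exact ⟨0, rfl⟩
    · exact ⟨i.succ, rfl⟩
  · rintro ⟨i, rfl⟩
    rcases Fin.eq_zero_or_eq_succ i with rfl | ⟨i', rfl⟩
    · exact ⟨(e 0, 0), mem_range_funB.mpr (Or.inl rfl), rfl⟩
    · exact ⟨(e i'.succ, c i'), mem_range_funB.mpr (Or.inr (Or.inr ⟨i', rfl⟩)), rfl⟩

lemma doubled_funA {e : Fin (m + 2) ↪ V} {c : Fin (m + 2) → Fin 3} {v : V} {x y : Fin 3}
    (hx : (v, x) ∈ Set.range (funA e c)) (hy : (v, y) ∈ Set.range (funA e c)) (hxy : x ≠ y) :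
    v = e (Fin.last (m + 1)) := by
  rcases mem_range_funA.mp hx with ⟨i, hi⟩ | hi
  · rcases mem_range_funA.mp hy with ⟨j, hj⟩ | hj
    · exfalso
      have h1 : v = e i := congrArg Prod.fst hi
      have h2 : v = e j := congrArg Prod.fst hj
      have hv : e i = e j := h1 ▸ h2
      obtain rfl := e.injective hv
      exact hxy ((congrArg Prod.snd hi).trans (congrArg Prod.snd hj).symm)
    · exact congrArg Prod.fst hj
  · exact congrArg Prod.fst hi

lemma doubled_funB {e : Fin (m + 2) ↪ V} {c : Fin (m + 1) → Fin 3} {v : V} {x y : Fin 3}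
    (hx : (v, x) ∈ Set.range (funB e c)) (hy : (v, y) ∈ Set.range (funB e c)) (hxy : x ≠ y) :
    v = e 0 := by
  rcases mem_range_funB.mp hx with hi | hi | ⟨i, hi⟩
  · exact congrArg Prod.fst hi
  · exact congrArg Prod.fst hi
  · rcases mem_range_funB.mp hy with hj | hj | ⟨j, hj⟩
    · exact congrArg Prod.fst hj
    · exact congrArg Prod.fst hj
    · exfalso
      have h1 : v = e i.succ := congrArg Prod.fst hi
      have h2 : v = e j.succ := congrArg Prod.fst hj
      have hv : e i.succ = e j.succ := h1 ▸ h2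
      obtain rfl := Fin.succ_injective _ (e.injective hv)
      exact hxy ((congrArg Prod.snd hi).trans (congrArg Prod.snd hj).symm)


def embA (e : Fin (m + 2) ↪ V) (c : Fin (m + 2) → Fin 3) : Fin (m + 3) ↪ V × Fin 3 :=
  ⟨funA e c, funA_inj e c⟩

def embB (e : Fin (m + 2) ↪ V) (c : Fin (m + 1) → Fin 3) : Fin (m + 3) ↪ V × Fin 3 :=
  ⟨funB e c, funB_inj e c⟩

@[simp] lemma coe_embA (e : Fin (m + 2) ↪ V) (c : Fin (m + 2) → Fin 3) :
    ⇑(embA e c) = funA e c := rfl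

@[simp] lemma coe_embB (e : Fin (m + 2) ↪ V) (c : Fin (m + 1) → Fin 3) :
    ⇑(embB e c) = funB e c := rfl

lemma stepCore (m : ℕ) {V : Type*} (H : OrientedHypergraph (m + 2) V) (hO : PropertyO H) :
    ∃ H' : OrientedHypergraph (m + 3) (V × Fin 3), PropertyO H' ∧
      H'.edges.card = 4 * 3 ^ (m + 1) * H.edges.card := by
  classical
  set A : Finset (Fin (m + 3) ↪ V × Fin 3) :=
    (H.edges ×ˢ (Finset.univ : Finset (Fin (m + 2) → Fin 3))).image
      (fun p => embA p.1 p.2) with hA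
  set B : Finset (Fin (m + 3) ↪ V × Fin 3) :=
    (H.edges ×ˢ (Finset.univ : Finset (Fin (m + 1) → Fin 3))).image
      (fun p => embB p.1 p.2) with hB
  have memA : ∀ t, t ∈ A ↔ ∃ e ∈ H.edges, ∃ c, embA e c = t := by
    intro t
    simp only [hA, Finset.mem_image, Finset.mem_product, Finset.mem_univ, and_true,
      Prod.exists]
    constructor
    · rintro ⟨e, c, he, rfl⟩; exact ⟨e, he, c, rfl⟩
    · rintro ⟨e, he, c, rfl⟩; exact ⟨e, c, he, rfl⟩
  have memB : ∀ t, t ∈ B ↔ ∃ e ∈ H.edges, ∃ c, embB e c = t := by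
    intro t
    simp only [hB, Finset.mem_image, Finset.mem_product, Finset.mem_univ, and_true,
      Prod.exists]
    constructor
    · rintro ⟨e, c, he, rfl⟩; exact ⟨e, he, c, rfl⟩
    · rintro ⟨e, he, c, rfl⟩; exact ⟨e, c, he, rfl⟩
  -- cross impossibility given equal ranges
  have crossAB : ∀ (e : Fin (m + 2) ↪ V) (c : Fin (m + 2) → Fin 3)
      (e' : Fin (m + 2) ↪ V) (c' : Fin (m + 1) → Fin 3), e ∈ H.edges → e' ∈ H.edges →
      Set.range (funA e c) = Set.range (funB e' c') → False := by
    intro e c e' c' he he' hr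
    have hfst : Set.range ⇑e = Set.range ⇑e' := by
      rw [← fst_range_funA e c, ← fst_range_funB e' c', hr]
    obtain rfl := H.eq_of_range_eq e he e' he' hfst
    have h1 : (e (Fin.last (m + 1)), c (Fin.last (m + 1))) ∈ Set.range (funB e c') := by
      rw [← hr]; exact mem_range_funA.mpr (Or.inl ⟨Fin.last (m + 1), rfl⟩)
    have h2 : (e (Fin.last (m + 1)), c (Fin.last (m + 1)) + 1) ∈ Set.range (funB e c') := by
      rw [← hr]; exact mem_range_funA.mpr (Or.inr rfl)
    have hv : e (Fin.last (m + 1)) = e 0 := doubled_funB h1 h2 (fin3_ne_add_one _)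
    have : Fin.last (m + 1) = (0 : Fin (m + 2)) := e.injective hv
    have hval := congrArg Fin.val this
    simp [Fin.val_last] at hval
  have orient : ∀ t1 ∈ A ∪ B, ∀ t2 ∈ A ∪ B, Set.range ⇑t1 = Set.range ⇑t2 → t1 = t2 := by
    intro t1 h1 t2 h2 hr
    rcases Finset.mem_union.mp h1 with h1 | h1 <;> rcases Finset.mem_union.mp h2 with h2 | h2
    · -- A A
      obtain ⟨e, he, c, rfl⟩ := (memA t1).mp h1
      obtain ⟨e', he', c', rfl⟩ := (memA t2).mp h2
      rw [coe_embA, coe_embA] at hr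
      have hfst : Set.range ⇑e = Set.range ⇑e' := by
        rw [← fst_range_funA e c, ← fst_range_funA e' c', hr]
      obtain rfl := H.eq_of_range_eq e he e' he' hfst
      have hc : c = c' := by
        funext i
        by_cases hi : i = Fin.last (m + 1)
        · subst hi
          have hin : (e (Fin.last (m + 1)), c (Fin.last (m + 1))) ∈ Set.range (funA e c') := by
            rw [← hr]; exact mem_range_funA.mpr (Or.inl ⟨Fin.last (m + 1), rfl⟩)
          have hin' : (e (Fin.last (m + 1)), c' (Fin.last (m + 1))) ∈ Set.range (funA e c) := by
            rw [hr]; exact mem_range_funA.mpr (Or.inl ⟨Fin.last (m + 1), rfl⟩)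
          rcases mem_range_funA.mp hin with ⟨j, hj⟩ | hj
          · have hv : e (Fin.last (m + 1)) = e j := congrArg Prod.fst hj
            obtain rfl := e.injective hv
            exact congrArg Prod.snd hj
          · have hx : c (Fin.last (m + 1)) = c' (Fin.last (m + 1)) + 1 := congrArg Prod.snd hj
            rcases mem_range_funA.mp hin' with ⟨j, hj'⟩ | hj'
            · have hv : e (Fin.last (m + 1)) = e j := congrArg Prod.fst hj'
              obtain rfl := e.injective hv
              exact (congrArg Prod.snd hj').symm
            · have hy : c' (Fin.last (m + 1)) = c (Fin.last (m + 1)) + 1 :=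
                congrArg Prod.snd hj'
              exact (fin3_pair_eq hx hy).elim
        · have hin : (e i, c i) ∈ Set.range (funA e c') := by
            rw [← hr]; exact mem_range_funA.mpr (Or.inl ⟨i, rfl⟩)
          rcases mem_range_funA.mp hin with ⟨j, hj⟩ | hj
          · have hv : e i = e j := congrArg Prod.fst hj
            obtain rfl := e.injective hv
            exact congrArg Prod.snd hj
          · have hv : e i = e (Fin.last (m + 1)) := congrArg Prod.fst hj
            exact absurd (e.injective hv) hi
      rw [hc]
    · -- A B
      obtain ⟨e, he, c, rfl⟩ := (memA t1).mp h1
      obtain ⟨e', he', c', rfl⟩ := (memB t2).mp h2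
      rw [coe_embA, coe_embB] at hr
      exact absurd (crossAB e c e' c' he he' hr) (fun h => h)
    · -- B A
      obtain ⟨e, he, c, rfl⟩ := (memB t1).mp h1
      obtain ⟨e', he', c', rfl⟩ := (memA t2).mp h2
      rw [coe_embA, coe_embB] at hr
      exact absurd (crossAB e' c' e c he' he hr.symm) (fun h => h)
    · -- B B
      obtain ⟨e, he, c, rfl⟩ := (memB t1).mp h1
      obtain ⟨e', he', c', rfl⟩ := (memB t2).mp h2
      rw [coe_embB, coe_embB] at hr
      have hfst : Set.range ⇑e = Set.range ⇑e' := by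
        rw [← fst_range_funB e c, ← fst_range_funB e' c', hr]
      obtain rfl := H.eq_of_range_eq e he e' he' hfst
      have hc : c = c' := by
        funext i
        have hin : (e i.succ, c i) ∈ Set.range (funB e c') := by
          rw [← hr]; exact mem_range_funB.mpr (Or.inr (Or.inr ⟨i, rfl⟩))
        rcases mem_range_funB.mp hin with hj | hj | ⟨j, hj⟩
        · have hv : e i.succ = e 0 := congrArg Prod.fst hj
          exact absurd (e.injective hv) (Fin.succ_ne_zero _)
        · have hv : e i.succ = e 0 := congrArg Prod.fst hj
          exact absurd (e.injective hv) (Fin.succ_ne_zero _)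
        · have hv : e i.succ = e j.succ := congrArg Prod.fst hj
          obtain rfl := Fin.succ_injective _ (e.injective hv)
          exact congrArg Prod.snd hj
      rw [hc]
  refine ⟨⟨A ∪ B, orient⟩, ?_, ?_⟩
  · -- Property O
    intro r hr
    haveI := hr
    have hmin : ∀ v : V, ∃ j, ∀ i, i ≠ j → r (v, j) (v, i) := by
      intro v
      exact exists_min3 r (fun j => (v, j)) (fun a b h => (Prod.mk.injEq _ _ _ _ ▸ h).2)
    choose b hb using hmin
    have hr' : IsStrictTotalOrder V (fun v w => r (v, b v) (w, b w)) := by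
      haveI ht1 : IsTrichotomous V (fun v w => r (v, b v) (w, b w)) := ⟨by
        intro v w
        rcases trichotomous_of r (v, b v) (w, b w) with h | h | h
        · exact fun h1 _ => absurd h h1
        · exact fun _ _ => congrArg Prod.fst h
        · exact fun _ h2 => absurd h h2⟩
      haveI ht2 : IsIrrefl V (fun v w => r (v, b v) (w, b w)) := ⟨fun v => irrefl_of r _⟩
      haveI ht3 : IsTrans V (fun v w => r (v, b v) (w, b w)) :=
        ⟨fun u v w h1 h2 => trans_of r h1 h2⟩
      haveI ht4 : IsStrictOrder V (fun v w => r (v, b v) (w, b w)) := ⟨⟩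
      exact ⟨⟩
    obtain ⟨e, he, hcons⟩ := hO _ hr'
    set x := e (Fin.last (m + 1)) with hx
    obtain ⟨j0, hj0⟩ := exists_cyc3 r (fun t => (x, t))
      (fun a b h => (Prod.mk.injEq _ _ _ _ ▸ h).2)
    set c : Fin (m + 2) → Fin 3 := fun i => if i = Fin.last (m + 1) then j0 else b (e i)
      with hcdef
    have hclast : c (Fin.last (m + 1)) = j0 := if_pos rfl
    have hcne : ∀ i : Fin (m + 2), i ≠ Fin.last (m + 1) → c i = b (e i) :=
      fun _ h => if_neg h
    have key : ∀ (i' : Fin (m + 2)), i' < Fin.last (m + 1) → ∀ t : Fin 3,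
        r (e i', b (e i')) (x, t) := by
      intro i' hi' t
      have h1 : r (e i', b (e i')) (x, b x) := hcons i' (Fin.last (m + 1)) hi'
      by_cases ht : t = b x
      · rw [ht]; exact h1
      · exact trans_of r h1 (hb x t ht)
    refine ⟨embA e c, Finset.mem_union_left _ ((memA _).mpr ⟨e, he, c, rfl⟩), ?_⟩
    intro i j hij
    rw [coe_embA]
    by_cases hj : j = Fin.last (m + 2)
    · subst hj
      obtain ⟨i', rfl⟩ := Fin.exists_castSucc_eq.mpr (ne_of_lt hij)
      rw [funA_last, funA_castSucc, hclast]
      by_cases hi' : i' = Fin.last (m + 1)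
      · subst hi'
        rw [hclast]
        exact hj0
      · rw [hcne i' hi']
        have hlt : i' < Fin.last (m + 1) := by
          rcases lt_or_eq_of_le (Fin.le_last i') with h | h
          · exact h
          · exact absurd h hi'
        exact key i' hlt (j0 + 1)
    · obtain ⟨j', rfl⟩ := Fin.exists_castSucc_eq.mpr hj
      have hilt : i < Fin.last (m + 2) := lt_of_lt_of_le hij (Fin.le_last _)
      obtain ⟨i', rfl⟩ := Fin.exists_castSucc_eq.mpr (ne_of_lt hilt)
      have hij' : i' < j' := Fin.castSucc_lt_castSucc_iff.mp hij
      rw [funA_castSucc, funA_castSucc]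
      have hi'ne : i' ≠ Fin.last (m + 1) := ne_of_lt (lt_of_lt_of_le hij' (Fin.le_last j'))
      rw [hcne i' hi'ne]
      by_cases hj'l : j' = Fin.last (m + 1)
      · subst hj'l
        rw [hclast]
        exact key i' hij' j0
      · rw [hcne j' hj'l]
        exact hcons i' j' hij'
  · -- cardinality
    have hinjA : Function.Injective
        (fun p : (Fin (m + 2) ↪ V) × (Fin (m + 2) → Fin 3) => embA p.1 p.2) := by
      rintro ⟨e, c⟩ ⟨e', c'⟩ h
      have h' : funA e c = funA e' c' := congrArg DFunLike.coe h
      have key : ∀ i : Fin (m + 2), (e i, c i) = (e' i, c' i) := by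
        intro i
        have := congrFun h' i.castSucc
        rwa [funA_castSucc, funA_castSucc] at this
      have he : e = e' := Function.Embedding.ext fun i => congrArg Prod.fst (key i)
      have hc : c = c' := funext fun i => congrArg Prod.snd (key i)
      rw [Prod.mk.injEq]
      exact ⟨he, hc⟩
    have hinjB : Function.Injective
        (fun p : (Fin (m + 2) ↪ V) × (Fin (m + 1) → Fin 3) => embB p.1 p.2) := by
      rintro ⟨e, c⟩ ⟨e', c'⟩ h
      have h' : funB e c = funB e' c' := congrArg DFunLike.coe h
      have key : ∀ i : Fin (m + 1), (e i.succ, c i) = (e' i.succ, c' i) := by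
        intro i
        have := congrFun h' i.succ.succ
        rwa [funB_ss, funB_ss] at this
      have h0 : e 0 = e' 0 := by
        have := congrFun h' 0
        rw [funB_zero, funB_zero] at this
        exact congrArg Prod.fst this
      have he : e = e' := Function.Embedding.ext fun i => by
        rcases Fin.eq_zero_or_eq_succ i with rfl | ⟨i', rfl⟩
        · exact h0
        · exact congrArg Prod.fst (key i')
      have hc : c = c' := funext fun i => congrArg Prod.snd (key i)
      rw [Prod.mk.injEq]
      exact ⟨he, hc⟩
    have hdisj : Disjoint A B := by
      rw [Finset.disjoint_left]
      intro t htA htB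
      obtain ⟨e', he', c', heq⟩ := (memB t).mp htB
      obtain ⟨e, he, c, rfl⟩ := (memA t).mp htA
      have h' : funB e' c' = funA e c := congrArg DFunLike.coe heq
      have h0 : (e' 0, (0 : Fin 3)) = (e 0, c 0) := by
        have := congrFun h' ((0 : Fin (m + 2)).castSucc)
        rwa [funA_castSucc, Fin.castSucc_zero, funB_zero] at this
      have h1 : (e' 0, (1 : Fin 3)) = (e 1, c 1) := by
        have := congrFun h' ((1 : Fin (m + 2)).castSucc)
        rwa [funA_castSucc, Fin.castSucc_one, ← Fin.succ_zero_eq_one, funB_one] at this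
      have hv : e 0 = e 1 := (congrArg Prod.fst h0).symm.trans (congrArg Prod.fst h1)
      have : (0 : Fin (m + 2)) = 1 := e.injective hv
      exact absurd this Fin.zero_ne_one
    show (A ∪ B).card = 4 * 3 ^ (m + 1) * H.edges.card
    rw [Finset.card_union_of_disjoint hdisj, hA, hB,
      Finset.card_image_of_injective _ hinjA, Finset.card_image_of_injective _ hinjB,
      Finset.card_product, Finset.card_product, Finset.card_univ, Finset.card_univ,
      Fintype.card_fun, Fintype.card_fun, Fintype.card_fin, Fintype.card_fin,
      Fintype.card_fin]
    ring

lemma transfer {k : ℕ} {V W : Type*} (σ : V ≃ W) (H : OrientedHypergraph k V)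
    (hO : PropertyO H) :
    ∃ H' : OrientedHypergraph k W, PropertyO H' ∧ H'.edges.card = H.edges.card := by
  classical
  have hinj : Function.Injective (fun e : Fin k ↪ V => e.trans σ.toEmbedding) := by
    intro e f h
    exact Function.Embedding.ext fun i => σ.injective (congrFun (congrArg DFunLike.coe h) i)
  have hrange : ∀ e : Fin k ↪ V, Set.range ⇑(e.trans σ.toEmbedding) = ⇑σ '' Set.range ⇑e := by
    intro e
    have : ⇑(e.trans σ.toEmbedding) = ⇑σ ∘ ⇑e := rfl
    rw [this, Set.range_comp]
  refine ⟨⟨H.edges.image (fun e => e.trans σ.toEmbedding), ?_⟩, ?_, ?_⟩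
  · intro t1 h1 t2 h2 hr
    obtain ⟨e, he, rfl⟩ := Finset.mem_image.mp h1
    obtain ⟨f, hf, rfl⟩ := Finset.mem_image.mp h2
    rw [hrange e, hrange f] at hr
    have := Set.image_injective.mpr σ.injective hr
    rw [H.eq_of_range_eq e he f hf this]
  · intro r hr
    haveI := hr
    have hr' : IsStrictTotalOrder V (fun v w => r (σ v) (σ w)) := by
      haveI ht1 : IsTrichotomous V (fun v w => r (σ v) (σ w)) := ⟨by
        intro v w
        rcases trichotomous_of r (σ v) (σ w) with h | h | h
        · exact fun h1 _ => absurd h h1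
        · exact fun _ _ => σ.injective h
        · exact fun _ h2 => absurd h h2⟩
      haveI ht2 : IsIrrefl V (fun v w => r (σ v) (σ w)) := ⟨fun v => irrefl_of r _⟩
      haveI ht3 : IsTrans V (fun v w => r (σ v) (σ w)) :=
        ⟨fun u v w h1 h2 => trans_of r h1 h2⟩
      haveI ht4 : IsStrictOrder V (fun v w => r (σ v) (σ w)) := ⟨⟩
      exact ⟨⟩
    obtain ⟨e, he, hcons⟩ := hO _ hr'
    exact ⟨e.trans σ.toEmbedding, Finset.mem_image.mpr ⟨e, he, rfl⟩,
      fun i j hij => hcons i j hij⟩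
  · exact Finset.card_image_of_injective _ hinj

def cyc3 (j : Fin 3) : Fin 2 ↪ Fin 3 :=
  ⟨![j, j + 1], by
    intro a b hab
    fin_cases a <;> fin_cases b <;> simp_all <;>
      first
        | rfl
        | exact absurd hab (fin3_ne_add_one j)
        | exact absurd hab.symm (fin3_ne_add_one j)⟩

@[simp] lemma cyc3_zero (j : Fin 3) : cyc3 j 0 = j := rfl

@[simp] lemma cyc3_one (j : Fin 3) : cyc3 j 1 = j + 1 := rfl

lemma base2 : ∃ H : OrientedHypergraph 2 (Fin 3), PropertyO H ∧ H.edges.card = 3 := by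
  classical
  have hinj : Function.Injective cyc3 := by
    intro j j' h
    have := congrFun (congrArg DFunLike.coe h) 0
    simpa using this
  refine ⟨⟨Finset.univ.image cyc3, ?_⟩, ?_, ?_⟩
  · intro t1 h1 t2 h2 hr
    obtain ⟨j, _, rfl⟩ := Finset.mem_image.mp h1
    obtain ⟨j', _, rfl⟩ := Finset.mem_image.mp h2
    have hmem1 : j ∈ Set.range ⇑(cyc3 j') := by rw [← hr]; exact ⟨0, rfl⟩
    have hmem2 : j' ∈ Set.range ⇑(cyc3 j) := by rw [hr]; exact ⟨0, rfl⟩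
    obtain ⟨a, ha⟩ := hmem1
    obtain ⟨a', ha'⟩ := hmem2
    have hj : j = j' := by
      fin_cases a <;> fin_cases a' <;> simp_all
      · -- j = j' + 1, j' = j + 1
        exact (fin3_pair_eq ha.symm ha'.symm).elim
    rw [hj]
  · intro r hr
    haveI := hr
    obtain ⟨j, hj⟩ := exists_cyc3 r id Function.injective_id
    refine ⟨cyc3 j, Finset.mem_image.mpr ⟨j, Finset.mem_univ j, rfl⟩, ?_⟩
    intro a b hab
    fin_cases a <;> fin_cases b <;>
      first
        | exact absurd hab (by decide)
        | simpa using hj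
  · rw [Finset.card_image_of_injective _ hinj, Finset.card_univ, Fintype.card_fin]

lemma main (k : ℕ) (hk : 2 ≤ k) :
    ∃ H : OrientedHypergraph k (Fin (3 ^ (k - 1))), PropertyO H ∧
      H.edges.card = 2 ^ (2 * (k - 2)) * 3 ^ ((k - 1).choose 2 + 1) := by
  induction k, hk using Nat.le_induction with
  | base =>
    obtain ⟨H, hO, hc⟩ := base2
    obtain ⟨H', hO', hc'⟩ := transfer (finCongr (by norm_num : 3 = 3 ^ (2 - 1))) H hO
    refine ⟨H', hO', ?_⟩
    rw [hc', hc]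
    decide
  | succ n hn ih =>
    obtain ⟨H, hO, hc⟩ := ih
    obtain ⟨m, rfl⟩ : ∃ m, n = m + 2 := ⟨n - 2, by omega⟩
    obtain ⟨H', hO', hc'⟩ := stepCore m H hO
    obtain ⟨H'', hO'', hc''⟩ :=
      transfer (finProdFinEquiv.trans (finCongr (pow_succ 3 (m + 1)).symm)) H' hO'
    refine ⟨H'', hO'', ?_⟩
    rw [hc'', hc', hc]
    have hch : (m + 2).choose 2 = (m + 1).choose 2 + (m + 1) := by
      rw [Nat.choose_succ_succ, Nat.choose_one_right]
      exact Nat.add_comm _ _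
    show 4 * 3 ^ (m + 1) * (2 ^ (2 * m) * 3 ^ ((m + 1).choose 2 + 1)) =
      2 ^ (2 * (m + 1)) * 3 ^ ((m + 2).choose 2 + 1)
    rw [hch]
    ring

end PropOAux


/-- for every `k ≥ 2` there is an oriented `k`-uniform hypergraph
with Property O on `3^{k−1}` vertices with exactly `2^{2(k−2)}·3^{C(k−1,2)+1}`
edges. -/
theorem construction_exists (k : ℕ) (hk : 2 ≤ k) :
    ∃ H : OrientedHypergraph k (Fin (3 ^ (k - 1))), PropertyO H ∧
      H.edges.card = 2 ^ (2 * (k - 2)) * 3 ^ ((k - 1).choose 2 + 1) := by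
  exact PropOAux.main k hk
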